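/- Let m ≥ 1 and let a ∈ ℝ with a ≠ 0, a ≠ 1 and a ≠ −1. Then ∑_{n=0}^{m−1} X_n(a)·X_n(1/a) = m·(a−1)(a^m+1)/((a+1)(a^m−1)). -/

import Mathlib

open Finset

/-- `Q m = exp(πi/m)`. -/
noncomputable def Q (m : ℕ) : ℂ := Complex.exp (Real.pi * Complex.I / m)

/-- The Fateev–Zamolodchikov coefficients
`X_j(a) = ∏_{k=0}^{j-1} (a·Q^k − Q^{−k})/(Q^{k+1} − a·Q^{−k−1})`. -/
noncomputable def X (m j : ℕ) (a : ℂ) : ℂ :=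
  ∏ k ∈ Finset.range j,
    (a * Q m ^ k - Q m ^ (-(k : ℤ))) / (Q m ^ (k + 1) - a * Q m ^ (-((k : ℤ) + 1)))

lemma Q_ne_zero (m : ℕ) : Q m ≠ 0 := Complex.exp_ne_zero _

lemma abs_Q (m : ℕ) : ‖Q m‖ = 1 := by
  have h : Real.pi * Complex.I / m = ((Real.pi / m : ℝ) : ℂ) * Complex.I := by
    push_cast; ring
  rw [Q, h, Complex.norm_exp_ofReal_mul_I]

lemma Q_pow_m (m : ℕ) (hm : 1 ≤ m) : Q m ^ m = -1 := by
  have hm' : (m : ℂ) ≠ 0 := Nat.cast_ne_zero.mpr (by omega)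
  rw [Q, ← Complex.exp_nat_mul,
    show (m:ℂ) * (Real.pi * Complex.I / m) = Real.pi * Complex.I by field_simp,
    Complex.exp_pi_mul_I]

lemma Q_sq_pow_ne_one (m : ℕ) (t : ℕ) (h0 : 0 < t) (h1 : t < m) :
    (Q m ^ 2) ^ t ≠ 1 := by
  have hm' : (m : ℂ) ≠ 0 := Nat.cast_ne_zero.mpr (by omega)
  rw [← pow_mul, Q, ← Complex.exp_nat_mul]
  intro h
  rw [Complex.exp_eq_one_iff] at h
  obtain ⟨n, hn⟩ := h
  have hπ : (Real.pi : ℂ) ≠ 0 := by exact_mod_cast Real.pi_ne_zero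
  have h2 : (2 : ℂ) * Real.pi * Complex.I ≠ 0 := by
    simp [hπ, Complex.I_ne_zero]
  have key : (t : ℂ) * (2 * Real.pi * Complex.I) = ((n * m : ℤ) : ℂ) * (2 * Real.pi * Complex.I) := by
    push_cast
    push_cast at hn
    field_simp at hn
    linear_combination (2 * Real.pi * Complex.I) * hn
  have ht : (t : ℤ) = n * m := by exact_mod_cast mul_right_cancel₀ h2 key
  have hdvd : (m : ℤ) ∣ (t : ℤ) := ⟨n, by linarith [ht]⟩
  have : m ∣ t := Int.ofNat_dvd.mp (by exact_mod_cast hdvd)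
  have := Nat.le_of_dvd h0 this
  omega

lemma sum_w_pow (m t : ℕ) (hm : 1 ≤ m) (ht : t < m) :
    ∑ n ∈ range m, ((Q m ^ 2) ^ t) ^ n = if t = 0 then (m : ℂ) else 0 := by
  rcases Nat.eq_zero_or_pos t with rfl | h0
  · simp
  · rw [if_neg h0.ne', geom_sum_eq (Q_sq_pow_ne_one m t h0 ht)]
    have h2 : (Q m ^ 2) ^ m = 1 := by
      rw [← pow_mul, mul_comm, pow_mul, Q_pow_m m hm]; norm_num
    rw [← pow_mul, mul_comm t m, pow_mul, h2, one_pow, sub_self, zero_div]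

/-- The diagonal unitarity sum:
`∑_{n=0}^{m−1} X_n(a)·X_n(1/a) = m·(a−1)(a^m+1)/((a+1)(a^m−1))` for real `a ≠ 0, ±1`. -/
theorem stmt5 (m : ℕ) (hm : 1 ≤ m) (a : ℝ) (ha0 : a ≠ 0) (ha1 : a ≠ 1) (ha2 : a ≠ -1) :
    ∑ n ∈ Finset.range m, X m n (a : ℂ) * X m n (1 / (a : ℂ)) =
      (m : ℂ) * ((a : ℂ) - 1) * ((a : ℂ) ^ m + 1) / (((a : ℂ) + 1) * ((a : ℂ) ^ m - 1)) := by
  simp only [one_div]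
  set b : ℂ := (a : ℂ) with hb
  have hb0 : b ≠ 0 := Complex.ofReal_ne_zero.mpr ha0
  have habs : ‖b‖ ≠ 1 := by
    rw [hb, Complex.norm_real, Real.norm_eq_abs]
    intro h
    rcases abs_eq (le_refl (0:ℝ) |>.trans zero_le_one) |>.mp h with h' | h'
    exacts [ha1 h', ha2 h']
  have habs' : ‖b⁻¹‖ ≠ 1 := by
    rw [norm_inv]; intro h; apply habs
    field_simp at h; simpa using h.symm
  have hq0 := Q_ne_zero m
  have hqp : ∀ j : ℕ, Q m ^ j ≠ 0 := fun j => pow_ne_zero _ hq0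
  have habsqp : ∀ j : ℕ, ‖Q m ^ j‖ = 1 := fun j => by
    rw [norm_pow, abs_Q, one_pow]
  have hkey : ∀ (c x y : ℂ), ‖c‖ ≠ 1 → ‖x‖ = 1 → ‖y‖ = 1 →
      c * x - y ≠ 0 := by
    intro c x y hc hx hy h
    apply hc
    have h' : c * x = y := sub_eq_zero.mp h
    have := congrArg (‖·‖) h'
    rw [norm_mul, hx, hy, mul_one] at this
    exact this
  -- nonvanishing of the factors of N k
  have hN1 : ∀ k : ℕ, b * Q m ^ k - (Q m ^ k)⁻¹ ≠ 0 := fun k =>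
    hkey b _ _ habs (habsqp k) (by rw [norm_inv, habsqp k, inv_one])
  have hN2 : ∀ k : ℕ, b⁻¹ * Q m ^ k - (Q m ^ k)⁻¹ ≠ 0 := fun k =>
    hkey b⁻¹ _ _ habs' (habsqp k) (by rw [norm_inv, habsqp k, inv_one])
  have hN : ∀ k : ℕ, (b * Q m ^ k - (Q m ^ k)⁻¹) * (b⁻¹ * Q m ^ k - (Q m ^ k)⁻¹) ≠ 0 :=
    fun k => mul_ne_zero (hN1 k) (hN2 k)
  -- denominators of the X-factors
  have hd1 : ∀ k : ℕ, Q m ^ (k+1) - b * (Q m ^ (k+1))⁻¹ ≠ 0 := by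
    intro k h
    exact hkey b ((Q m ^ (k+1))⁻¹) (Q m ^ (k+1)) habs
      (by rw [norm_inv, habsqp, inv_one]) (habsqp (k+1)) (by linear_combination -h)
  have hd2 : ∀ k : ℕ, Q m ^ (k+1) - b⁻¹ * (Q m ^ (k+1))⁻¹ ≠ 0 := by
    intro k h
    exact hkey b⁻¹ ((Q m ^ (k+1))⁻¹) (Q m ^ (k+1)) habs'
      (by rw [norm_inv, habsqp, inv_one]) (habsqp (k+1)) (by linear_combination -h)
  -- zpow normalization
  have hz : ∀ j : ℕ, Q m ^ (-(j : ℤ)) = (Q m ^ j)⁻¹ := fun j => by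
    rw [zpow_neg, zpow_natCast]
  have hz' : ∀ k : ℕ, Q m ^ (-((k : ℤ) + 1)) = (Q m ^ (k+1))⁻¹ := fun k => by
    rw [show -((k : ℤ) + 1) = -(((k+1 : ℕ) : ℤ)) by push_cast; ring, hz]
  -- telescoping
  have hX : ∀ n : ℕ, X m n b * X m n b⁻¹ =
      ((b * Q m ^ 0 - (Q m ^ 0)⁻¹) * (b⁻¹ * Q m ^ 0 - (Q m ^ 0)⁻¹)) /
      ((b * Q m ^ n - (Q m ^ n)⁻¹) * (b⁻¹ * Q m ^ n - (Q m ^ n)⁻¹)) := by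
    intro n
    induction n with
    | zero =>
      simp only [X, range_zero, prod_empty, one_mul, pow_zero, inv_one, mul_one]
      rw [div_self (by simpa using hN 0)]
    | succ k ih =>
      have e1 : ∀ c : ℂ, X m (k+1) c = X m k c *
          ((c * Q m ^ k - (Q m ^ k)⁻¹) / (Q m ^ (k + 1) - c * (Q m ^ (k+1))⁻¹)) := by
        intro c
        simp only [X, prod_range_succ, hz, hz']
      rw [e1, e1, mul_mul_mul_comm, ih, div_mul_div_comm, div_mul_div_comm,
        div_eq_div_iff (mul_ne_zero (hN k) (mul_ne_zero (hd1 k) (hd2 k))) (hN (k+1))]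
      field_simp
  -- step B
  have hQ2m : (Q m ^ 2) ^ m = 1 := by
    rw [← pow_mul, mul_comm, pow_mul, Q_pow_m m hm]; norm_num
  have hwm : ∀ n : ℕ, ((Q m ^ 2) ^ n) ^ m = 1 := fun n => by
    rw [← pow_mul, mul_comm, pow_mul, hQ2m, one_pow]
  have habsw : ∀ n : ℕ, ‖(Q m ^ 2) ^ n‖ = 1 := fun n => by
    rw [norm_pow, norm_pow, abs_Q, one_pow, one_pow]
  have h1 : ∀ n : ℕ, b - (Q m ^ 2) ^ n ≠ 0 := fun n => by
    have := hkey b 1 ((Q m ^ 2) ^ n) habs norm_one (habsw n)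
    simpa using this
  have h2 : ∀ n : ℕ, b * (Q m ^ 2) ^ n - 1 ≠ 0 := fun n =>
    hkey b _ 1 habs (habsw n) norm_one
  have hbm : b ^ m - 1 ≠ 0 := by
    rw [sub_ne_zero]
    intro h
    have hab : ‖b‖ ^ m = 1 := by rw [← norm_pow, h, norm_one]
    rcases lt_or_gt_of_ne habs with hlt | hgt
    · have := pow_lt_one₀ (norm_nonneg b) hlt (by omega : m ≠ 0)
      linarith
    · have := one_lt_pow₀ hgt (by omega : m ≠ 0)
      linarith
  have hb1 : b + 1 ≠ 0 := by
    intro h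
    apply ha2
    have : b = -1 := by linear_combination h
    rw [hb] at this
    exact_mod_cast this
  have hterm : ∀ n : ℕ, X m n b * X m n b⁻¹ =
      (b - 1) / (b + 1) * (b * (b - (Q m ^ 2) ^ n)⁻¹ + (b * (Q m ^ 2) ^ n - 1)⁻¹) := by
    intro n
    rw [hX n]
    have hwn : (Q m ^ 2) ^ n = (Q m ^ n) ^ 2 := by
      rw [← pow_mul, ← pow_mul, mul_comm]
    have e1 := hN1 n
    have e2 := hN2 n
    have e3 := h1 n
    have e4 := h2 n
    rw [hwn] at e3 e4 ⊢
    have e5 := hqp n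
    simp only [pow_zero, inv_one, mul_one]
    rw [div_eq_iff (mul_ne_zero e1 e2)]
    field_simp
    ring
  have hgeom1 : ∀ n : ℕ, (b - (Q m ^ 2) ^ n)⁻¹ =
      (∑ i ∈ range m, b ^ i * ((Q m ^ 2) ^ n) ^ (m - 1 - i)) / (b ^ m - 1) := by
    intro n
    have hg := geom_sum₂_mul b ((Q m ^ 2) ^ n) m
    rw [hwm n] at hg
    rw [eq_div_iff hbm, ← hg, mul_comm (∑ i ∈ range m, b ^ i * ((Q m ^ 2) ^ n) ^ (m - 1 - i)) _,
      ← mul_assoc, inv_mul_cancel₀ (h1 n), one_mul]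
  have hgeom2 : ∀ n : ℕ, (b * (Q m ^ 2) ^ n - 1)⁻¹ =
      (∑ i ∈ range m, (b * (Q m ^ 2) ^ n) ^ i) / (b ^ m - 1) := by
    intro n
    have hg := geom_sum_mul (b * (Q m ^ 2) ^ n) m
    rw [mul_pow, hwm n, mul_one] at hg
    rw [eq_div_iff hbm, ← hg, mul_comm (∑ i ∈ range m, (b * (Q m ^ 2) ^ n) ^ i) _,
      ← mul_assoc, inv_mul_cancel₀ (h2 n), one_mul]
  have hS1 : ∑ n ∈ range m, ∑ i ∈ range m, b ^ i * ((Q m ^ 2) ^ n) ^ (m - 1 - i)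
      = (m : ℂ) * b ^ (m - 1) := by
    have e : ∀ n i : ℕ, ((Q m ^ 2) ^ n) ^ (m - 1 - i) = ((Q m ^ 2) ^ (m - 1 - i)) ^ n :=
      fun n i => pow_right_comm _ _ _
    simp only [e]
    rw [sum_comm]
    rw [sum_congr rfl (fun i hi => by
      rw [← mul_sum, sum_w_pow m (m - 1 - i) hm (by omega)])]
    rw [Finset.sum_eq_single_of_mem (m - 1) (mem_range.mpr (by omega))
      (fun i hi hne => by
        have : m - 1 - i ≠ 0 := by
          have := mem_range.mp hi; omega
        simp [this])]
    simp [mul_comm]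
  have hS2 : ∑ n ∈ range m, ∑ i ∈ range m, (b * (Q m ^ 2) ^ n) ^ i = (m : ℂ) := by
    have e : ∀ n i : ℕ, (b * (Q m ^ 2) ^ n) ^ i = b ^ i * ((Q m ^ 2) ^ i) ^ n :=
      fun n i => by rw [mul_pow, pow_right_comm]
    simp only [e]
    rw [sum_comm]
    rw [sum_congr rfl (fun i hi => by
      rw [← mul_sum, sum_w_pow m i hm (mem_range.mp hi)])]
    rw [Finset.sum_eq_single_of_mem 0 (mem_range.mpr (by omega))
      (fun i _ hne => by simp [hne])]
    simp
  -- assembly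
  have hterm' : ∀ n ∈ range m, X m n b * X m n b⁻¹ =
      ((b - 1) * b / ((b + 1) * (b ^ m - 1))) *
        (∑ i ∈ range m, b ^ i * ((Q m ^ 2) ^ n) ^ (m - 1 - i)) +
      ((b - 1) / ((b + 1) * (b ^ m - 1))) * (∑ i ∈ range m, (b * (Q m ^ 2) ^ n) ^ i) := by
    intro n _
    rw [hterm n, hgeom1 n, hgeom2 n]
    simp only [← div_div]
    ring
  have goal2 : ∑ n ∈ range m, X m n b * X m n b⁻¹ =
      (m : ℂ) * (b - 1) * (b ^ m + 1) / ((b + 1) * (b ^ m - 1)) := by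
    rw [Finset.sum_congr rfl hterm', sum_add_distrib, ← mul_sum, ← mul_sum, hS1, hS2]
    have hpow : b * b ^ (m - 1) = b ^ m := by
      rw [← pow_succ']
      congr 1
      omega
    rw [div_mul_eq_mul_div, div_mul_eq_mul_div, ← add_div,
      div_eq_div_iff (mul_ne_zero hb1 hbm) (mul_ne_zero hb1 hbm)]
    linear_combination ((m : ℂ) * (b - 1) * (b + 1) * (b ^ m - 1)) * hpow
  exact goal2
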